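/- Let n > 1 and let S be a set of n points in the plane with pairwise distances at least 1. Then there exists a line ℓ disjoint from S such that ℓ separates S (some segment between two points of S crosses ℓ) and every point of S is at distance at least 0.01·n^{−1/3} from ℓ. -/

import Mathlib

set_option maxHeartbeats 2000000 in
private lemma imo2020P6_count (n : ℕ) (S : Finset (EuclideanSpace ℝ (Fin 2)))
    (hS : ∀ P ∈ S, ∀ Q ∈ S, P ≠ Q → 1 ≤ dist P Q)
    (δ D : ℝ) (hδ0 : 0 < δ) (hδle : δ ≤ 1/100) (hD1 : 1 ≤ D) (hD0 : (0:ℝ) < D)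
    (hn2 : (2:ℝ) ≤ n) (hδ3 : δ ^ 3 * n = 1/1000000)
    (X Y : EuclideanSpace ℝ (Fin 2) → ℝ)
    (hparab : ∀ P ∈ S, X P ^ 2 + Y P ^ 2 ≤ 2 * X P * D)
    (hdist2 : ∀ P Q : EuclideanSpace ℝ (Fin 2),
      (X P - X Q)^2 + (Y P - Y Q)^2 = dist P Q ^ 2)
    (A : EuclideanSpace ℝ (Fin 2)) (hA : A ∈ S)
    (hblock : ∀ j : ℕ, 1 ≤ j → 2*δ*(j:ℝ) < D → ∃ P ∈ S, |X P - 2*δ*(j:ℝ)| < δ)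
    (hcard : S.card = n) : False := by
  classical
  -- floor lemma
  have hfloor : ∀ a b : ℝ, ⌊a⌋ = ⌊b⌋ → |a - b| < 1 := by
    intro a b h
    have h1 := Int.floor_le a; have h2 := Int.lt_floor_add_one a
    have h3 := Int.floor_le b; have h4 := Int.lt_floor_add_one b
    rw [h] at h1 h2
    rw [abs_sub_lt_iff]; constructor <;> linarith
  -- blocker chooser
  set g : ℕ → EuclideanSpace ℝ (Fin 2) := fun j =>
    if h : 1 ≤ j ∧ 2*δ*(j:ℝ) < D then (hblock j h.1 h.2).choose else A with hg
  have hgspec : ∀ j : ℕ, 1 ≤ j → 2*δ*(j:ℝ) < D →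
      g j ∈ S ∧ |X (g j) - 2*δ*(j:ℝ)| < δ := by
    intro j h1 h2
    rw [hg]
    simp only [dif_pos (And.intro h1 h2)]
    obtain ⟨hm, hp⟩ := (hblock j h1 h2).choose_spec
    exact ⟨hm, hp⟩
  have hwin : ∀ j j' : ℕ, 1 ≤ j → 2*δ*(j:ℝ) < D → 1 ≤ j' → 2*δ*(j':ℝ) < D →
      g j = g j' → j = j' := by
    intro j j' h1 h2 h1' h2' heq
    have e1 := (hgspec j h1 h2).2
    have e2 := (hgspec j' h1' h2').2
    rw [heq] at e1
    have habs : |(j:ℝ) - (j':ℝ)| < 1 := by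
      rw [abs_sub_lt_iff] at e1 e2 ⊢
      constructor <;> nlinarith
    have h' : |(((j:ℤ) - (j':ℤ) : ℤ) : ℝ)| < 1 := by push_cast; push_cast at habs; exact habs
    rw [← Int.cast_abs] at h'
    have h'' : |(j:ℤ) - (j':ℤ)| < 1 := by exact_mod_cast h'
    rw [abs_lt] at h''
    omega
  -- global bound: D ≤ 3δn
  have hDn : D ≤ 3*δ*n := by
    by_contra hD'
    push_neg at hD'
    have hjD : ∀ j : ℕ, j ∈ Finset.Icc 1 (n+1) → 1 ≤ j ∧ 2*δ*(j:ℝ) < D := by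
      intro j hj
      rw [Finset.mem_Icc] at hj
      refine ⟨hj.1, ?_⟩
      have hc : (j:ℝ) ≤ (n:ℝ)+1 := by exact_mod_cast hj.2
      nlinarith [mul_le_mul_of_nonneg_left hc hδ0.le]
    have hIn : ∀ j ∈ Finset.Icc 1 (n+1), g j ∈ S := fun j hj =>
      (hgspec j (hjD j hj).1 (hjD j hj).2).1
    have hinjG : Set.InjOn g ↑(Finset.Icc 1 (n+1)) := by
      intro j hj j' hj' heq
      have hj2 := hjD j (by exact_mod_cast hj)
      have hj2' := hjD j' (by exact_mod_cast hj')
      exact hwin j j' hj2.1 hj2.2 hj2'.1 hj2'.2 heq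
    have hle := Finset.card_le_card_of_injOn g hIn hinjG
    rw [hcard] at hle
    simp [Nat.card_Icc] at hle
  -- local counting near A
  set K : ℕ := ⌈(1:ℝ)/(2*δ)⌉₊ - 1 with hK
  have hx50 : (50:ℝ) ≤ 1/(2*δ) := by
    rw [le_div_iff₀ (by positivity)]; nlinarith
  have hceil1 : 1 ≤ ⌈(1:ℝ)/(2*δ)⌉₊ := Nat.ceil_pos.mpr (by positivity)
  have hKc : (K:ℝ) = (⌈(1:ℝ)/(2*δ)⌉₊ : ℝ) - 1 := by
    rw [hK, Nat.cast_sub hceil1, Nat.cast_one]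
  have hK_ge : 1/(2*δ) - 1 ≤ (K:ℝ) := by
    rw [hKc]; linarith [Nat.le_ceil ((1:ℝ)/(2*δ))]
  have hK_lt : (K:ℝ) < 1/(2*δ) := by
    rw [hKc]
    have := Nat.ceil_lt_add_one (show (0:ℝ) ≤ 1/(2*δ) by positivity)
    linarith
  have hK2δ : 2*δ*(K:ℝ) < 1 := by
    have h2 : (2*δ) * (1/(2*δ)) = 1 := by field_simp
    nlinarith [hK_lt, hδ0]
  have hjDloc : ∀ j : ℕ, j ∈ Finset.Icc 1 K → (1 ≤ j ∧ 2*δ*(j:ℝ) < D) := by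
    intro j hj
    rw [Finset.mem_Icc] at hj
    refine ⟨hj.1, ?_⟩
    have hjK : (j:ℝ) ≤ (K:ℝ) := by exact_mod_cast hj.2
    nlinarith [mul_le_mul_of_nonneg_left hjK hδ0.le]
  have hbounds : ∀ j ∈ Finset.Icc 1 K,
      0 < X (g j) ∧ X (g j) < (101/100:ℝ) ∧ Y (g j)^2 ≤ (101/50:ℝ) * D := by
    intro j hj
    obtain ⟨hj1, hjDj⟩ := hjDloc j hj
    obtain ⟨hPS, hPw⟩ := hgspec j hj1 hjDj
    rw [abs_sub_lt_iff] at hPw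
    have hj1' : (1:ℝ) ≤ (j:ℝ) := by exact_mod_cast hj1
    have hjK : (j:ℝ) ≤ (K:ℝ) := by exact_mod_cast (Finset.mem_Icc.mp hj).2
    have hx1 : 0 < X (g j) := by
      nlinarith [hPw.2, mul_le_mul_of_nonneg_left hj1' hδ0.le]
    have hx2 : X (g j) < (101/100:ℝ) := by
      nlinarith [hPw.1, mul_le_mul_of_nonneg_left hjK hδ0.le, hK2δ, hδle]
    have hy := hparab (g j) hPS
    refine ⟨hx1, hx2, ?_⟩
    nlinarith [mul_lt_mul_of_pos_right hx2 hD0, sq_nonneg (X (g j))]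
  set h : ℝ := Real.sqrt ((101/50:ℝ) * D) with hh
  have hh0 : 0 ≤ h := Real.sqrt_nonneg _
  have hh2 : h^2 = (101/50:ℝ)*D := Real.sq_sqrt (by nlinarith)
  have hYle : ∀ j ∈ Finset.Icc 1 K, |Y (g j)| ≤ h := by
    intro j hj
    have h1 := (hbounds j hj).2.2
    have h2 : Real.sqrt (Y (g j)^2) ≤ h := by rw [hh]; exact Real.sqrt_le_sqrt h1
    rwa [Real.sqrt_sq_eq_abs] at h2
  set L : ℕ := ⌈h/(7/10:ℝ)⌉₊ with hL
  have hLge : h/(7/10:ℝ) ≤ (L:ℝ) := Nat.le_ceil _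
  have hLlt : (L:ℝ) < h/(7/10:ℝ) + 1 := Nat.ceil_lt_add_one (by positivity)
  set φ : ℕ → ℤ × ℤ := fun j => (⌊X (g j)/(7/10:ℝ)⌋, ⌊Y (g j)/(7/10:ℝ)⌋) with hφ
  have hmaps : ∀ j ∈ Finset.Icc 1 K,
      φ j ∈ Finset.Icc (0:ℤ) 1 ×ˢ Finset.Icc (-(L:ℤ)) (L:ℤ) := by
    intro j hj
    obtain ⟨hx1, hx2, hy2⟩ := hbounds j hj
    have hyle := hYle j hj
    rw [abs_le] at hyle
    simp only [hφ]
    rw [Finset.mem_product, Finset.mem_Icc, Finset.mem_Icc]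
    have h7 : (0:ℝ) < (7/10:ℝ) := by norm_num
    refine ⟨⟨?_, ?_⟩, ?_, ?_⟩
    · exact Int.floor_nonneg.mpr (le_of_lt (by linarith : (0:ℝ) < X (g j)/(7/10:ℝ)))
    · have hlt : X (g j)/(7/10:ℝ) < ((2:ℤ):ℝ) := by
        push_cast; rw [div_lt_iff₀ h7]; linarith
      have := Int.floor_lt.mpr hlt
      omega
    · apply Int.le_floor.mpr
      have hYlo : -((L:ℕ):ℝ) ≤ Y (g j)/(7/10:ℝ) := by
        rw [le_div_iff₀ h7]; linarith [hLge, hyle.1]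
      push_cast
      exact hYlo
    · have hYhi : Y (g j)/(7/10:ℝ) ≤ ((L:ℕ):ℝ) := by
        rw [div_le_iff₀ h7]; linarith [hLge, hyle.2]
      have := Int.floor_le_floor (R := ℝ) hYhi
      rwa [Int.floor_natCast] at this
  have hinj : Set.InjOn φ ↑(Finset.Icc 1 K) := by
    intro j hj j' hj' heq
    simp only [Finset.coe_Icc, Set.mem_Icc] at hj hj'
    have hjm : j ∈ Finset.Icc 1 K := Finset.mem_Icc.mpr hj
    have hjm' : j' ∈ Finset.Icc 1 K := Finset.mem_Icc.mpr hj'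
    obtain ⟨hj1, hjDj⟩ := hjDloc j hjm
    obtain ⟨hj1', hjDj'⟩ := hjDloc j' hjm'
    apply hwin j j' hj1 hjDj hj1' hjDj'
    by_contra hne
    have hge1 : 1 ≤ dist (g j) (g j') :=
      hS _ (hgspec j hj1 hjDj).1 _ (hgspec j' hj1' hjDj').1 hne
    have hfx : ⌊X (g j)/(7/10:ℝ)⌋ = ⌊X (g j')/(7/10:ℝ)⌋ := congrArg Prod.fst heq
    have hfy : ⌊Y (g j)/(7/10:ℝ)⌋ = ⌊Y (g j')/(7/10:ℝ)⌋ := congrArg Prod.snd heq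
    have hdx := hfloor _ _ hfx
    have hdy := hfloor _ _ hfy
    have hdX : |X (g j) - X (g j')| < (7/10:ℝ) := by
      rw [abs_sub_lt_iff] at hdx ⊢; constructor <;> linarith [hdx.1, hdx.2]
    have hdY : |Y (g j) - Y (g j')| < (7/10:ℝ) := by
      rw [abs_sub_lt_iff] at hdy ⊢; constructor <;> linarith [hdy.1, hdy.2]
    have hsq : ∀ a : ℝ, |a| < (7/10:ℝ) → a^2 < (49/100:ℝ) := by
      intro a ha
      nlinarith [sq_abs a, abs_nonneg a]
    have e1 : (X (g j) - X (g j'))^2 < (49/100:ℝ) := hsq _ hdX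
    have e2 : (Y (g j) - Y (g j'))^2 < (49/100:ℝ) := hsq _ hdY
    have e3 := hdist2 (g j) (g j')
    have hd2 : dist (g j) (g j') ^ 2 < 1 := by
      rw [← e3]; linarith
    have hd3 : (1:ℝ) ≤ dist (g j) (g j') ^ 2 := by
      nlinarith [hge1, dist_nonneg (x := g j) (y := g j')]
    linarith
  have hcardle := Finset.card_le_card_of_injOn φ hmaps hinj
  have hcard1 : (Finset.Icc 1 K).card = K := by simp [Nat.card_Icc]
  have hcard2 : (Finset.Icc (0:ℤ) 1 ×ˢ Finset.Icc (-(L:ℤ)) (L:ℤ)).card = 2 * (2*L+1) := by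
    rw [Finset.card_product, Int.card_Icc, Int.card_Icc]
    rw [show ((1:ℤ)+1-0) = 2 by norm_num, show ((L:ℤ)+1 - -(L:ℤ)) = 2*(L:ℤ)+1 by ring]
    rw [show ((2:ℤ)).toNat = 2 from rfl]
    omega
  rw [hcard1, hcard2] at hcardle
  have hKr : (K:ℝ) ≤ 2*(2*(L:ℝ)+1) := by exact_mod_cast hcardle
  have key : 1/(2*δ) ≤ 40*h/7 + 7 := by linarith [hK_ge, hKr, hLlt]
  rw [div_le_iff₀ (by positivity)] at key
  have s2 : ((7/100:ℝ)) ≤ δ*h := by nlinarith [key, hδle, hh0, hδ0]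
  have s3 : ((49/10000:ℝ)) ≤ (δ*h)^2 := by nlinarith [s2, hδ0.le, hh0]
  have s4 : (δ*h)^2 = δ^2*((101/50:ℝ)*D) := by rw [mul_pow, hh2]
  have s5 : ((3/1250:ℝ)) ≤ δ^2 * D := by nlinarith [s3, s4]
  have hfin : δ^2*D ≤ 3*(δ^3*(n:ℝ)) := by
    nlinarith [mul_le_mul_of_nonneg_left hDn (sq_nonneg δ)]
  rw [hδ3] at hfin
  linarith [s5, hfin]

set_option maxHeartbeats 2000000 in
theorem stmt_15 (n : ℕ) (hn : 1 < n) (S : Finset (EuclideanSpace ℝ (Fin 2)))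
    (hcard : S.card = n)
    (hS : ∀ P ∈ S, ∀ Q ∈ S, P ≠ Q → 1 ≤ dist P Q) :
    -- There is a line ℓ = {x | ⟪u, x⟫ = c}, disjoint from S, separating S,
    -- with every point of S at distance ≥ 0.01 n^{-1/3} from ℓ.
    ∃ (u : EuclideanSpace ℝ (Fin 2)) (c : ℝ), u ≠ 0 ∧
      (∃ P ∈ S, ∃ Q ∈ S, (inner ℝ u P : ℝ) < c ∧ c < (inner ℝ u Q : ℝ)) ∧
      (∀ P ∈ S, 0.01 * (n : ℝ) ^ (-(1/3) : ℝ) ≤ |(inner ℝ u P : ℝ) - c| / ‖u‖) := by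
  classical
  by_contra hcon
  push_neg at hcon
  set δ : ℝ := 0.01 * (n : ℝ) ^ (-(1/3) : ℝ) with hδdef
  have hn2 : (2:ℝ) ≤ n := by exact_mod_cast hn
  have hn0 : (0:ℝ) < n := by linarith
  have hδ0 : 0 < δ := by rw [hδdef]; positivity
  have hδle : δ ≤ 1/100 := by
    have h1 : (n:ℝ) ^ (-(1/3) : ℝ) ≤ 1 :=
      Real.rpow_le_one_of_one_le_of_nonpos (by linarith) (by norm_num)
    rw [hδdef]; nlinarith
  have hδ3 : δ ^ 3 * n = 1/1000000 := by
    have h1 : ((n:ℝ) ^ (-(1/3) : ℝ))^(3:ℕ) = (n:ℝ)⁻¹ := by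
      rw [← Real.rpow_natCast ((n:ℝ) ^ (-(1/3):ℝ)) 3, ← Real.rpow_mul (by linarith)]
      norm_num
      rw [Real.rpow_neg_one]
    rw [hδdef, mul_pow, h1]
    field_simp
    ring
  -- a diameter-realizing pair
  have hmain : ∃ A ∈ S, ∃ B ∈ S, ∀ P ∈ S, ∀ Q ∈ S, dist P Q ≤ dist A B := by
    have hne : (S ×ˢ S).Nonempty := by
      have : S.Nonempty := Finset.card_pos.mp (by omega)
      exact this.product this
    obtain ⟨p, hp, hpmax⟩ := Finset.exists_max_image (S ×ˢ S) (fun q => dist q.1 q.2) hne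
    rw [Finset.mem_product] at hp
    exact ⟨p.1, hp.1, p.2, hp.2, fun P hP Q hQ =>
      hpmax (P, Q) (Finset.mem_product.mpr ⟨hP, hQ⟩)⟩
  obtain ⟨A, hA, B, hB, hmax⟩ := hmain
  set D := dist A B with hD
  have hD1 : 1 ≤ D := by
    obtain ⟨A₀, hA₀, B₀, hB₀, hne⟩ := Finset.one_lt_card.mp (by rw [hcard]; exact hn)
    exact le_trans (hS A₀ hA₀ B₀ hB₀ hne) (hmax A₀ hA₀ B₀ hB₀)
  have hD0 : (0:ℝ) < D := by linarith
  have hDne : D ≠ 0 := by linarith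
  have hAB : A ≠ B := by
    intro h; rw [hD, h, dist_self] at hD1; linarith
  set v : EuclideanSpace ℝ (Fin 2) := B - A with hv
  have hv0 : v ≠ 0 := sub_ne_zero.mpr (Ne.symm hAB)
  have hnv : ‖v‖ = D := by rw [hv, ← dist_eq_norm, dist_comm]
  have hvc0 : v 0 = B 0 - A 0 := rfl
  have hvc1 : v 1 = B 1 - A 1 := rfl
  have hD2 : v 0 ^ 2 + v 1 ^ 2 = D ^ 2 := by
    have h1 : ‖v‖ = Real.sqrt (v 0 ^2 + v 1 ^2) := by
      rw [EuclideanSpace.norm_eq, Fin.sum_univ_two]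
      simp [Real.norm_eq_abs, sq_abs]
    rw [hnv] at h1
    rw [h1, Real.sq_sqrt (by positivity)]
  set X : EuclideanSpace ℝ (Fin 2) → ℝ :=
    fun P => (v 0 * (P 0 - A 0) + v 1 * (P 1 - A 1)) / D with hX
  set Y : EuclideanSpace ℝ (Fin 2) → ℝ :=
    fun P => (-(v 1) * (P 0 - A 0) + v 0 * (P 1 - A 1)) / D with hY
  have hinner : ∀ P : EuclideanSpace ℝ (Fin 2),
      (inner ℝ v P : ℝ) = (inner ℝ v A : ℝ) + D * X P := by
    intro P
    have h1 : (inner ℝ v P : ℝ) = v 0 * P 0 + v 1 * P 1 := by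
      simp [PiLp.inner_apply, Fin.sum_univ_two, mul_comm]
    have h2 : (inner ℝ v A : ℝ) = v 0 * A 0 + v 1 * A 1 := by
      simp [PiLp.inner_apply, Fin.sum_univ_two, mul_comm]
    rw [h1, h2, hX]
    field_simp
    ring
  have hXB : X B = D := by
    rw [hX]
    simp only
    rw [← hvc0, ← hvc1]
    field_simp
    linarith [hD2]
  have hXA : X A = 0 := by rw [hX]; simp
  have hYA : Y A = 0 := by rw [hY]; simp
  have hdist2 : ∀ P Q : EuclideanSpace ℝ (Fin 2),
      (X P - X Q)^2 + (Y P - Y Q)^2 = dist P Q ^ 2 := by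
    intro P Q
    have hd : dist P Q = Real.sqrt ((P 0 - Q 0)^2 + (P 1 - Q 1)^2) := by
      rw [EuclideanSpace.dist_eq, Fin.sum_univ_two]
      simp [Real.dist_eq, sq_abs]
    rw [hd, Real.sq_sqrt (by positivity), hX, hY]
    simp only
    field_simp
    linear_combination ((P 0 - Q 0)^2 + (P 1 - Q 1)^2) * hD2
  have hparab : ∀ P ∈ S, X P ^ 2 + Y P ^ 2 ≤ 2 * X P * D := by
    intro P hP
    have h1 := hdist2 P A
    rw [hXA, hYA] at h1
    have hPA : X P ^2 + Y P ^2 = (P 0 - A 0)^2 + (P 1 - A 1)^2 := by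
      have hd : dist P A = Real.sqrt ((P 0 - A 0)^2 + (P 1 - A 1)^2) := by
        rw [EuclideanSpace.dist_eq, Fin.sum_univ_two]
        simp [Real.dist_eq, sq_abs]
      rw [hd] at h1
      rw [Real.sq_sqrt (by positivity)] at h1
      simpa using h1
    have hPB : dist P B ≤ D := hmax P hP B hB
    have hPB2 : (P 0 - B 0)^2 + (P 1 - B 1)^2 ≤ D^2 := by
      have hd : dist P B = Real.sqrt ((P 0 - B 0)^2 + (P 1 - B 1)^2) := by
        rw [EuclideanSpace.dist_eq, Fin.sum_univ_two]
        simp [Real.dist_eq, sq_abs]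
      have h3 : dist P B ^ 2 ≤ D ^ 2 := by
        have := dist_nonneg (x := P) (y := B)
        nlinarith
      rwa [hd, Real.sq_sqrt (by positivity)] at h3
    have hmul : D * X P = v 0 * (P 0 - A 0) + v 1 * (P 1 - A 1) := by
      rw [hX]; field_simp
    have hB0 : P 0 - B 0 = (P 0 - A 0) - v 0 := by rw [hvc0]; ring
    have hB1 : P 1 - B 1 = (P 1 - A 1) - v 1 := by rw [hvc1]; ring
    rw [hB0, hB1] at hPB2
    have hexp : (P 0 - A 0)^2 + (P 1 - A 1)^2
        ≤ 2*(v 0 * (P 0 - A 0) + v 1 * (P 1 - A 1)) := by nlinarith [hPB2, hD2]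
    nlinarith [hPA, hexp, hmul]
  -- blocker existence from the negated statement
  have hblock : ∀ j : ℕ, 1 ≤ j → 2*δ*(j:ℝ) < D → ∃ P ∈ S, |X P - 2*δ*(j:ℝ)| < δ := by
    intro j hj1 hjD
    have hj1' : (1:ℝ) ≤ (j:ℝ) := by exact_mod_cast hj1
    have hj0 : (0:ℝ) < (j:ℝ) := by linarith
    have hpos : (0:ℝ) < 2*δ*D*(j:ℝ) := by positivity
    have hsep : ∃ P ∈ S, ∃ Q ∈ S,
        (inner ℝ v P : ℝ) < (inner ℝ v A : ℝ) + 2*δ*D*(j:ℝ) ∧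
        (inner ℝ v A : ℝ) + 2*δ*D*(j:ℝ) < (inner ℝ v Q : ℝ) := by
      refine ⟨A, hA, B, hB, by linarith, ?_⟩
      rw [hinner B, hXB]
      have := mul_lt_mul_of_pos_left hjD hD0
      nlinarith [this]
    obtain ⟨P, hP, hlt⟩ := hcon v ((inner ℝ v A : ℝ) + 2*δ*D*(j:ℝ)) hv0 hsep
    refine ⟨P, hP, ?_⟩
    rw [hnv] at hlt
    have h2 : (inner ℝ v P : ℝ) - ((inner ℝ v A : ℝ) + 2*δ*D*(j:ℝ)) = D * (X P - 2*δ*(j:ℝ)) := by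
      rw [hinner P]; ring
    rw [h2, abs_mul, abs_of_pos hD0, mul_comm, mul_div_assoc, div_self hDne, mul_one] at hlt
    exact hlt
  exact imo2020P6_count n S hS δ D hδ0 hδle hD1 hD0 hn2 hδ3 X Y hparab hdist2 A hA hblock hcard
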